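/- Completeness of undermining arguments: for every P ⊆ Σ, if P is a minimal unsatisfiable set of premisses (P is unsatisfiable but every proper subset of P is satisfiable) and φ is the ≺'-least element of P, then the undermining argument (P \ {φ}) ⇏ φ belongs to the set A∞ of derivable arguments. -/

import Mathlib

/-- Propositional formulas over atoms `α`, built with `¬` and `→`. -/
inductive Fml (α : Type) : Type
  | atom : α → Fml α
  | neg  : Fml α → Fml α
  | imp  : Fml α → Fml α → Fml α

/-- Satisfaction of a formula by an interpretation (a set of atoms). -/
def Fml.sat {α : Type} (M : Set α) : Fml α → Prop
  | .atom a => a ∈ M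
  | .neg φ => ¬ Fml.sat M φ
  | .imp φ ψ => Fml.sat M φ → Fml.sat M ψ

/-- Semantic entailment `S ⊨ φ`. -/
def Entails {α : Type} (S : Set (Fml α)) (φ : Fml α) : Prop :=
  ∀ M : Set α, (∀ ψ ∈ S, Fml.sat M ψ) → Fml.sat M φ

/-- Satisfiability of a set of formulas. -/
def Satisfiable {α : Type} (S : Set (Fml α)) : Prop :=
  ∃ M : Set α, ∀ ψ ∈ S, Fml.sat M ψ

/-- Propositional tautology. -/
def Tautology {α : Type} (φ : Fml α) : Prop :=
  ∀ M : Set α, Fml.sat M φ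

/-- `prec` is a reliability relation on `Sg`: a strict partial order
(irreflexive, asymmetric, transitive) relating only members of `Sg`. -/
def IsReliability {β : Type} (Sg : Set β) (prec : β → β → Prop) : Prop :=
  (∀ a b, prec a b → a ∈ Sg ∧ b ∈ Sg) ∧
  (∀ a, ¬ prec a a) ∧
  (∀ a b, prec a b → ¬ prec b a) ∧
  (∀ a b c, prec a b → prec b c → prec a c)

/-- `lt` is a strict linear order on `Sg` extending `prec`. -/
def IsLinearExt {β : Type} (Sg : Set β) (prec lt : β → β → Prop) : Prop :=
  (∀ a b, lt a b → a ∈ Sg ∧ b ∈ Sg) ∧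
  (∀ a, ¬ lt a a) ∧
  (∀ a b c, lt a b → lt b c → lt a c) ∧
  (∀ a ∈ Sg, ∀ b ∈ Sg, a ≠ b → lt a b ∨ lt b a) ∧
  (∀ a b, prec a b → lt a b)

/-- Arguments: supporting arguments `P ⇒ φ` and undermining arguments `P ⇏ φ`. -/
inductive Arg (α : Type) : Type
  | sup : Set (Fml α) → Fml α → Arg α
  | und : Set (Fml α) → Fml α → Arg α

/-- The set `A∞` of derivable arguments, as an inductive predicate:
initial arguments, the axiom rule, modus ponens and the contradiction rule. -/
inductive Derivable {α : Type} (Sg : Set (Fml α)) (lt : Fml α → Fml α → Prop) :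
    Arg α → Prop
  | initial {φ} (h : φ ∈ Sg) : Derivable Sg lt (.sup {φ} φ)
  | ax {φ} (h : Tautology φ) : Derivable Sg lt (.sup ∅ φ)
  | mp {P Q φ ψ} (h1 : Derivable Sg lt (.sup P φ))
      (h2 : Derivable Sg lt (.sup Q (.imp φ ψ))) :
      Derivable Sg lt (.sup (P ∪ Q) ψ)
  | contra {P Q φ η} (h1 : Derivable Sg lt (.sup P φ))
      (h2 : Derivable Sg lt (.sup Q (.neg φ)))
      (hmem : η ∈ P ∪ Q) (hmin : ∀ x ∈ P ∪ Q, x ≠ η → lt η x) :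
      Derivable Sg lt (.und ((P ∪ Q) \ {η}) η)

/-- The set `A∞` of derivable arguments. -/
def Ainf {α : Type} (Sg : Set (Fml α)) (lt : Fml α → Fml α → Prop) : Set (Arg α) :=
  {a | Derivable Sg lt a}

/-- `Out_A(S)`: premisses ruled out by undermining arguments in `A`
whose antecedents lie in `S`. -/
def OutA {α : Type} (A : Set (Arg α)) (S : Set (Fml α)) : Set (Fml α) :=
  {φ | ∃ P, Arg.und P φ ∈ A ∧ P ⊆ S}

open scoped Classical in
/-- The most reliable consistent set of premisses built from an enumeration. -/
noncomputable def mrcBuild {α : Type} (l : List (Fml α)) : Set (Fml α) :=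
  l.foldl (fun D σ => if Satisfiable (insert σ D) then insert σ D else D) ∅

/-- `l` enumerates `Sg` so that more reliable premisses come first:
whenever `l[j] ≺ l[k]` one has `k < j`. -/
def IsEnum {β : Type} (Sg : Set β) (prec : β → β → Prop) (l : List β) : Prop :=
  l.Nodup ∧ (∀ x, x ∈ l ↔ x ∈ Sg) ∧
  ∀ (j k : Fin l.length), prec (l.get j) (l.get k) → (k : ℕ) < (j : ℕ)

/-- `D` is a most reliable consistent set of premisses of `⟨Sg, prec⟩`. -/
def MRC {α : Type} (Sg : Set (Fml α)) (prec : Fml α → Fml α → Prop)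
    (D : Set (Fml α)) : Prop :=
  ∃ l : List (Fml α), IsEnum Sg prec l ∧ D = mrcBuild l

/-- `Prem(M)`: the premisses of `Sg` satisfied by interpretation `M`. -/
def PremOf {α : Type} (Sg : Set (Fml α)) (M : Set α) : Set (Fml α) :=
  {φ | φ ∈ Sg ∧ Fml.sat M φ}

/-- The preference relation `M ⊏ N` on interpretations. -/
def Pref {α : Type} (Sg : Set (Fml α)) (prec : Fml α → Fml α → Prop)
    (M N : Set α) : Prop :=
  PremOf Sg M ≠ PremOf Sg N ∧
  ∀ φ ∈ PremOf Sg M \ PremOf Sg N, ∃ ψ ∈ PremOf Sg N \ PremOf Sg M, prec φ ψ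

/-- `Th(⟨Sg, prec⟩)`: formulas entailed by every most reliable consistent set. -/
def ThR {α : Type} (Sg : Set (Fml α)) (prec : Fml α → Fml α → Prop) : Set (Fml α) :=
  {φ | ∀ D, MRC Sg prec D → Entails D φ}

/-- The reliability relation of the `a`-revised theory:
`prec` restricted to `Sg \ {a}`, with `a` strictly more reliable than
every other premiss. -/
def RevPrec {α : Type} (Sg : Set (Fml α)) (prec : Fml α → Fml α → Prop) (a : Fml α) :
    Fml α → Fml α → Prop :=
  fun x y => (prec x y ∧ x ∈ Sg \ {a} ∧ y ∈ Sg \ {a}) ∨ (x ∈ Sg \ {a} ∧ y = a)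

/-- Chain of implications `q1 → (q2 → ... → ψ)`. -/
def impChain {α : Type} (l : List (Fml α)) (ψ : Fml α) : Fml α :=
  l.foldr Fml.imp ψ

lemma sat_impChain {α : Type} (M : Set α) (ψ : Fml α) :
    ∀ l : List (Fml α),
      Fml.sat M (impChain l ψ) ↔ ((∀ x ∈ l, Fml.sat M x) → Fml.sat M ψ)
  | [] => by simp [impChain]
  | q :: l => by
    simp only [impChain, List.foldr_cons, Fml.sat, List.mem_cons]
    rw [show List.foldr Fml.imp ψ l = impChain l ψ from rfl, sat_impChain M ψ l]
    constructor
    · intro h hall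
      exact h (hall q (Or.inl rfl)) (fun x hx => hall x (Or.inr hx))
    · intro h hq hall
      exact h (fun x hx => hx.elim (fun e => e ▸ hq) (hall x))

lemma derive_chain {α : Type} (Sg : Set (Fml α)) (lt : Fml α → Fml α → Prop)
    (ψ : Fml α) :
    ∀ (l : List (Fml α)) (Q : Set (Fml α)),
      Derivable Sg lt (.sup Q (impChain l ψ)) → (∀ x ∈ l, x ∈ Sg) →
      Derivable Sg lt (.sup (Q ∪ {x | x ∈ l}) ψ)
  | [], Q, h, _ => by simpa [impChain] using h
  | q :: l, Q, h, hSg => by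
    have h1 : Derivable Sg lt (.sup {q} q) :=
      Derivable.initial (hSg q List.mem_cons_self)
    have h2 : Derivable Sg lt (.sup ({q} ∪ Q) (impChain l ψ)) :=
      Derivable.mp h1 h
    have h3 := derive_chain Sg lt ψ l ({q} ∪ Q) h2
      (fun x hx => hSg x (List.mem_cons_of_mem q hx))
    have hset : ({q} ∪ Q) ∪ {x | x ∈ l} = Q ∪ {x | x ∈ q :: l} := by
      ext x
      simp only [Set.mem_union, Set.mem_singleton_iff, Set.mem_setOf_eq,
        List.mem_cons]
      tauto
    rw [hset] at h3
    exact h3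

/-- Completeness of undermining arguments: if `P ⊆ Σ` is a minimal
unsatisfiable set of premisses and `φ` is its `≺'`-least element, then
`(P \ {φ}) ⇏ φ` is derivable. -/
theorem undermining_completeness {α : Type} (Sg : Set (Fml α)) (hfin : Sg.Finite)
    (prec lt : Fml α → Fml α → Prop)
    (hprec : IsReliability Sg prec) (hlt : IsLinearExt Sg prec lt)
    (P : Set (Fml α)) (hP : P ⊆ Sg)
    (hunsat : ¬ Satisfiable P) (hmin : ∀ Q, Q ⊂ P → Satisfiable Q)
    (φ : Fml α) (hφ : φ ∈ P) (hleast : ∀ x ∈ P, x ≠ φ → lt φ x) :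
    Arg.und (P \ {φ}) φ ∈ Ainf Sg lt := by
  classical
  have hfinP : (P \ {φ}).Finite := (hfin.subset hP).subset Set.diff_subset
  set l : List (Fml α) := hfinP.toFinset.toList with hl
  have hmeml : ∀ x, x ∈ l ↔ x ∈ P \ {φ} := by
    intro x
    rw [hl, Finset.mem_toList, Set.Finite.mem_toFinset]
  -- the implication chain is a tautology
  have htaut : Tautology (impChain l (.neg φ)) := by
    intro M
    rw [sat_impChain]
    intro hall hsat
    apply hunsat
    refine ⟨M, fun ψ hψ => ?_⟩
    by_cases hψφ : ψ = φ
    · exact hψφ ▸ hsat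
    · exact hall ψ ((hmeml ψ).2 ⟨hψ, hψφ⟩)
  have hch : Derivable Sg lt (.sup (∅ ∪ {x | x ∈ l}) (.neg φ)) :=
    derive_chain Sg lt _ l ∅ (Derivable.ax htaut)
      (fun x hx => hP ((hmeml x).1 hx).1)
  have hsetl : (∅ : Set (Fml α)) ∪ {x | x ∈ l} = P \ {φ} := by
    ext x
    simp only [Set.empty_union, Set.mem_setOf_eq, hmeml]
  rw [hsetl] at hch
  have h1 : Derivable Sg lt (.sup {φ} φ) := Derivable.initial (hP hφ)
  have hunion : ({φ} : Set (Fml α)) ∪ (P \ {φ}) = P := by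
    ext x
    simp only [Set.mem_union, Set.mem_singleton_iff, Set.mem_diff]
    constructor
    · rintro (rfl | ⟨h, _⟩) <;> [exact hφ; exact h]
    · intro hx
      by_cases hxφ : x = φ
      · exact Or.inl hxφ
      · exact Or.inr ⟨hx, hxφ⟩
  have hcon := Derivable.contra h1 hch
    (show φ ∈ ({φ} : Set (Fml α)) ∪ (P \ {φ}) from Or.inl rfl)
    (by
      intro x hx hxφ
      rw [hunion] at hx
      exact hleast x hx hxφ)
  have : ({φ} ∪ (P \ {φ})) \ {φ} = P \ {φ} := by rw [hunion]
  rw [this] at hcon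
  exact hcon
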